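/- Let h, a ∈ ℂᵈ with a ≠ 0, let α > 0 and η > 0, and set p = ⟨a, h⟩ = Σᵢ conj(aᵢ)hᵢ. Then the function J(c) = (α/2)‖h − c·a‖² + η|c| on ℂ has a unique minimizer c*, given by c* = 0 if |p| ≤ η/α, and c* = (p/‖a‖²)·(1 − η/(α|p|)) if |p| > η/α. -/

import Mathlib

set_option maxHeartbeats 1000000 in
/-- Closed-form complex soft-thresholding solution of the single-atom coefficient
subproblem (steps 7 and 17 of Algorithm 1). -/
theorem stmt9 {d : ℕ} (h a : EuclideanSpace ℂ (Fin d)) (ha : a ≠ 0)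
    (α η : ℝ) (hα : 0 < α) (hη : 0 < η) :
    let p : ℂ := inner ℂ a h
    let cstar : ℂ :=
      if ‖p‖ ≤ η / α then 0
      else ((1 - η / (α * ‖p‖) : ℝ) : ℂ) * (p / ((‖a‖ ^ 2 : ℝ) : ℂ))
    (∀ c : ℂ,
      α / 2 * ‖h - cstar • a‖ ^ 2 + η * ‖cstar‖ ≤
        α / 2 * ‖h - c • a‖ ^ 2 + η * ‖c‖) ∧
    (∀ c : ℂ,
      (∀ c' : ℂ, α / 2 * ‖h - c • a‖ ^ 2 + η * ‖c‖ ≤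
        α / 2 * ‖h - c' • a‖ ^ 2 + η * ‖c'‖) → c = cstar) := by
  intro p cstar
  have ha' : (0:ℝ) < ‖a‖ := norm_pos_iff.mpr ha
  have hN : (0:ℝ) < ‖a‖ ^ 2 := by positivity
  set N : ℝ := ‖a‖ ^ 2 with hNdef
  have expand : ∀ c : ℂ, ‖h - c • a‖ ^ 2
      = ‖h‖ ^ 2 - 2 * (c * (starRingEnd ℂ) p).re + ‖c‖ ^ 2 * N := by
    intro c
    have h1 := norm_sub_sq (𝕜 := ℂ) h (c • a)
    rw [inner_smul_right] at h1
    have h2 : (inner ℂ h a : ℂ) = (starRingEnd ℂ) p := (inner_conj_symm h a).symm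
    rw [h2] at h1
    rw [h1, norm_smul]
    simp [mul_pow, hNdef]
  have hcstar : cstar = if ‖p‖ ≤ η / α then 0
      else ((1 - η / (α * ‖p‖) : ℝ) : ℂ) * (p / ((N : ℝ) : ℂ)) := rfl
  have key : ∀ c : ℂ, c ≠ cstar →
      α / 2 * ‖h - cstar • a‖ ^ 2 + η * ‖cstar‖ <
        α / 2 * ‖h - c • a‖ ^ 2 + η * ‖c‖ := by
    intro c hc
    rw [expand c, expand cstar]
    by_cases hP : ‖p‖ ≤ η / α
    · have hc0 : cstar = 0 := by rw [hcstar, if_pos hP]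
      rw [hc0] at hc ⊢
      have hcc : 0 < ‖c‖ := by
        simpa [AbsoluteValue.pos_iff] using hc
      have hR : (c * (starRingEnd ℂ) p).re ≤ ‖c‖ * ‖p‖ := by
        calc (c * (starRingEnd ℂ) p).re ≤ ‖c * (starRingEnd ℂ) p‖ :=
              Complex.re_le_norm _
          _ = ‖c‖ * ‖p‖ := by rw [norm_mul, Complex.norm_conj]
      have hαP : α * ‖p‖ ≤ η := by
        rw [le_div_iff₀ hα] at hP; linarith
      simp only [zero_mul, Complex.zero_re, map_zero, norm_zero, mul_zero, add_zero,
        ne_eq, OfNat.ofNat_ne_zero, not_false_eq_true, zero_pow]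
      nlinarith [mul_pos (mul_pos hα hN) (mul_pos hcc hcc), mul_pos hcc hcc,
        mul_le_mul_of_nonneg_left hR hα.le,
        mul_le_mul_of_nonneg_right hαP hcc.le]
    · push_neg at hP
      set P : ℝ := ‖p‖ with hPdef
      have hPpos : 0 < P := lt_trans (div_pos hη hα) hP
      set s : ℝ := (1 - η / (α * P)) / N with hsdef
      have hη' : η < α * P := by
        rw [div_lt_iff₀ hα] at hP; linarith
      have hspos : 0 < s := by
        apply div_pos _ hN
        have : η / (α * P) < 1 := (div_lt_one (by positivity)).mpr hη'
        linarith
      have hNne : ((N : ℝ) : ℂ) ≠ 0 := Complex.ofReal_ne_zero.mpr hN.ne'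
      have hcs : cstar = (s : ℂ) * p := by
        rw [hcstar, if_neg (not_le.mpr hP), hsdef]
        push_cast
        field_simp
      set cc : ℝ := ‖c‖ with hccdef
      set R : ℝ := (c * (starRingEnd ℂ) p).re with hRdef
      have habs_cstar : ‖cstar‖ = s * P := by
        rw [hcs, norm_mul, Complex.norm_real, Real.norm_eq_abs, abs_of_pos hspos]
      have hre_cstar : (cstar * (starRingEnd ℂ) p).re = s * P ^ 2 := by
        rw [hcs, mul_assoc, Complex.mul_conj, ← Complex.ofReal_mul,
          Complex.ofReal_re, ← Complex.sq_norm]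
      set D : ℝ := ‖c - cstar‖ with hDdef
      have f4 : 0 < D := by
        rw [hDdef]
        simpa [AbsoluteValue.pos_iff, sub_eq_zero] using hc
      have f1 : D ^ 2 = cc ^ 2 - 2 * (s * R) + s ^ 2 * P ^ 2 := by
        rw [hDdef, Complex.sq_norm, Complex.normSq_sub, hcs]
        simp only [map_mul, Complex.conj_ofReal, Complex.normSq_ofReal]
        rw [hccdef, hRdef, Complex.sq_norm, hPdef, Complex.sq_norm]
        have : (c * ((s:ℂ) * (starRingEnd ℂ) p)).re = s * (c * (starRingEnd ℂ) p).re := by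
          rw [show c * ((s:ℂ) * (starRingEnd ℂ) p) = (s:ℂ) * (c * (starRingEnd ℂ) p) by ring,
            Complex.re_ofReal_mul]
        rw [this]; ring
      have f2 : R ≤ cc * P := by
        rw [hRdef, hccdef, hPdef]
        calc (c * (starRingEnd ℂ) p).re ≤ ‖c * (starRingEnd ℂ) p‖ :=
              Complex.re_le_norm _
          _ = ‖c‖ * ‖p‖ := by rw [norm_mul, Complex.norm_conj]
      have f3 : N * α * s * P = α * P - η := by
        rw [hsdef]
        field_simp
      have iden : P * (α/2 * cc^2 * N - α * R + η * cc
            - (α/2 * s^2 * P^2 * N - α * s * P^2 + η * s * P))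
          = α * N / 2 * D^2 * P + η * (cc * P - R) := by
        linear_combination (-(α*N/2*P)) * f1 + (R - s*P^2) * f3
      have hE : 0 < α/2 * cc^2 * N - α * R + η * cc
          - (α/2 * s^2 * P^2 * N - α * s * P^2 + η * s * P) := by
        nlinarith [iden, mul_nonneg hη.le (sub_nonneg.mpr f2),
          mul_pos (mul_pos (mul_pos hα hN) (mul_pos f4 f4)) hPpos, hPpos]
      rw [habs_cstar, hre_cstar]
      have hsq : (s * P) ^ 2 = s ^ 2 * P ^ 2 := by ring
      rw [hsq]
      linarith [hE]
  constructor
  · intro c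
    by_cases hc : c = cstar
    · rw [hc]
    · exact (key c hc).le
  · intro c hc
    by_contra hne
    have h1 := key c hne
    have h2 := hc cstar
    linarith
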